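/- Let n and f be natural numbers with f ≥ 1 and n ≥ 3f + 1, and let Q ∈ (0,1) be a real number. Let w_1,…,w_n be real numbers in [0,1] such that w_i = 1 for all i in some set S ⊆ {1,…,n} with |S| ≥ n − f. Let T_1,…,T_n be independent random variables, each uniformly distributed on [0,1], and set X_i = w_i·T_i. If r = 3 + ⌈log₂(n) + log₂(1/Q)⌉ and ε = 2^{−r}, then the probability that there exist distinct indices i ≠ j with X_j = max_{1≤k≤n} X_k and X_i ≥ X_j − 2ε is at most Q. -/

import Mathlib

open MeasureTheory ProbabilityTheory
open scoped ENNReal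

/-- Key real inequality: `β · γ² ≤ 8ε`. -/
lemma near_max_key_real (w ε : ℝ) (hw0 : 0 ≤ w) (hw1 : w ≤ 1) (hε0 : 0 < ε)
    (hε4 : ε ≤ 1 / 4) :
    (if 2 * ε < w then 2 * ε / w else 1) * (min (w + 2 * ε) 1 * min (w + 2 * ε) 1)
      ≤ 8 * ε := by
  have hγ0 : 0 ≤ min (w + 2 * ε) 1 := le_min (by linarith) (by norm_num)
  have hγle : min (w + 2 * ε) 1 ≤ w + 2 * ε := min_le_left _ _
  have hγle1 : min (w + 2 * ε) 1 ≤ 1 := min_le_right _ _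
  split_ifs with h
  · have hwpos : 0 < w := by linarith
    rcases le_or_gt (w + 2 * ε) 1 with hc | hc
    · have hmin : min (w + 2 * ε) 1 = w + 2 * ε := min_eq_left hc
      rw [hmin, div_mul_eq_mul_div, div_le_iff₀ hwpos]
      have h1 : w + 2 * ε ≤ 2 * w := by linarith
      have h2 : (w + 2 * ε) * (w + 2 * ε) ≤ 4 * (w * w) := by nlinarith
      have h3 : 2 * ε * ((w + 2 * ε) * (w + 2 * ε)) ≤ 2 * ε * (4 * (w * w)) := by
        apply mul_le_mul_of_nonneg_left h2; positivity
      have h5 : w * w ≤ w := mul_le_of_le_one_right hwpos.le hw1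
      have h6 : ε * (w * w) ≤ ε * w := mul_le_mul_of_nonneg_left h5 hε0.le
      linarith
    · have hmin : min (w + 2 * ε) 1 = 1 := min_eq_right hc.le
      rw [hmin, mul_one, mul_one, div_le_iff₀ hwpos]
      nlinarith
  · push_neg at h
    nlinarith

/-- Let `n, f` be natural numbers with `f ≥ 1` and `n ≥ 3f + 1`, and `Q ∈ (0,1)` a
real.  Let `w_1, …, w_n ∈ [0,1]` with `w_i = 1` for all `i` in some set `S` of size
at least `n - f`.  Let `T_1, …, T_n` be independent random variables, each uniform
on `[0,1]`, and set `X_i = w_i · T_i`.  If `r = 3 + ⌈log₂ n + log₂ (1/Q)⌉` and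
`ε = 2^{-r}`, then the probability that there exist distinct indices `i ≠ j` with
`X_j = max_k X_k` and `X_i ≥ X_j - 2ε` is at most `Q`. -/
theorem near_maximum_prob_bound_rounds {Ω : Type*} [MeasurableSpace Ω] (μ : Measure Ω)
    [IsProbabilityMeasure μ] (n f : ℕ) (hf : 1 ≤ f) (hn : 3 * f + 1 ≤ n)
    (Q : ℝ) (hQ0 : 0 < Q) (hQ1 : Q < 1)
    (w : Fin n → ℝ) (hw : ∀ i, w i ∈ Set.Icc (0 : ℝ) 1)
    (S : Finset (Fin n)) (hS : n - f ≤ S.card) (hSone : ∀ i ∈ S, w i = 1)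
    (T : Fin n → Ω → ℝ) (hTmeas : ∀ i, Measurable (T i))
    (hTindep : iIndepFun T μ)
    (hTunif : ∀ i, μ.map (T i) = volume.restrict (Set.Icc (0 : ℝ) 1))
    (r : ℤ) (hr : r = 3 + ⌈Real.logb 2 n + Real.logb 2 (1 / Q)⌉)
    (ε : ℝ) (hεdef : ε = (2 : ℝ) ^ (-r)) :
    μ {ω | ∃ i j, i ≠ j ∧ (∀ k, w k * T k ω ≤ w j * T j ω) ∧
        w j * T j ω - 2 * ε ≤ w i * T i ω}
      ≤ ENNReal.ofReal Q := by
  classical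
  have hn4 : 4 ≤ n := by omega
  have hn0R : (0 : ℝ) < n := by positivity
  have hn4R : (4 : ℝ) ≤ n := by exact_mod_cast hn4
  have hε0 : 0 < ε := by rw [hεdef]; positivity
  -- arithmetic : 8 n ε ≤ Q
  have harith : 8 * (n : ℝ) * ε ≤ Q := by
    set c : ℤ := ⌈Real.logb 2 n + Real.logb 2 (1 / Q)⌉ with hc
    have hlogb : Real.logb 2 ((n : ℝ) / Q) = Real.logb 2 n + Real.logb 2 (1 / Q) := by
      rw [div_eq_mul_inv, ← one_div,
        Real.logb_mul (ne_of_gt hn0R) (by positivity)]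
    have hcge : Real.logb 2 ((n : ℝ) / Q) ≤ (c : ℝ) := by
      rw [hlogb]; exact Int.le_ceil _
    have h2c : (2 : ℝ) ^ (-c) ≤ Q / n := by
      have h1 : (2 : ℝ) ^ (-c) = (2 : ℝ) ^ ((-c : ℤ) : ℝ) := by
        rw [Real.rpow_intCast]
      have h2 : (2 : ℝ) ^ ((-c : ℤ) : ℝ) ≤ (2 : ℝ) ^ (-(Real.logb 2 ((n : ℝ) / Q))) := by
        apply Real.rpow_le_rpow_of_exponent_le one_le_two
        push_cast
        linarith
      have h3 : (2 : ℝ) ^ (-(Real.logb 2 ((n : ℝ) / Q))) = Q / n := by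
        rw [Real.rpow_neg (by norm_num),
          Real.rpow_logb (by norm_num) (by norm_num) (div_pos hn0R hQ0), inv_div]
      rw [h1]; rw [h3] at h2; exact h2
    have hεle : ε ≤ (1 / 8) * (Q / n) := by
      rw [hεdef, hr, neg_add, zpow_add₀ (two_ne_zero)]
      have : (2 : ℝ) ^ (-(3 : ℤ)) = 1 / 8 := by norm_num
      rw [this]
      have h8 : (0 : ℝ) < 1 / 8 := by norm_num
      exact mul_le_mul_of_nonneg_left h2c (by norm_num)
    calc 8 * (n : ℝ) * ε ≤ 8 * (n : ℝ) * ((1 / 8) * (Q / n)) := by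
          apply mul_le_mul_of_nonneg_left hεle (by positivity)
      _ = Q := by field_simp
  have hε4 : ε ≤ 1 / 4 := by nlinarith
  -- the uniform measure
  set ν : Measure ℝ := volume.restrict (Set.Icc (0 : ℝ) 1) with hνdef
  haveI hν1 : IsProbabilityMeasure ν := by
    constructor
    rw [hνdef, Measure.restrict_apply_univ, Real.volume_Icc]
    norm_num
  -- joint law is the product measure
  set g : Ω → (Fin n → ℝ) := fun ω i => T i ω with hgdef
  have hgm : Measurable g := measurable_pi_lambda _ hTmeas
  have hmap : Measure.map g μ = Measure.pi (fun _ : Fin n => ν) := by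
    refine (Measure.pi_eq ?_).symm
    intro s hs
    rw [Measure.map_apply hgm (MeasurableSet.univ_pi hs)]
    have hpre : g ⁻¹' (Set.pi Set.univ s)
        = ⋂ i ∈ (Finset.univ : Finset (Fin n)), T i ⁻¹' s i := by
      ext ω; simp [hgdef, Set.mem_pi]
    rw [hpre, hTindep.measure_inter_preimage_eq_mul _ (fun i _ => hs i)]
    refine Finset.prod_congr rfl fun i _ => ?_
    rw [← hTunif i, Measure.map_apply (hTmeas i) (hs i)]
  -- the max over coordinates other than i
  have hne : ∀ i : Fin n, ((Finset.univ : Finset (Fin n)).erase i).Nonempty := by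
    intro i
    rw [← Finset.card_pos, Finset.card_erase_of_mem (Finset.mem_univ i), Finset.card_univ,
      Fintype.card_fin]
    omega
  set M : Fin n → (Fin n → ℝ) → ℝ :=
    fun i x => ((Finset.univ : Finset (Fin n)).erase i).sup' (hne i) (fun k => w k * x k)
    with hMdef
  have hMmeas : ∀ i, Measurable (M i) := by
    intro i
    have : M i = ((Finset.univ : Finset (Fin n)).erase i).sup' (hne i)
        (fun k => fun x : Fin n → ℝ => w k * x k) := by
      funext x
      rw [Finset.sup'_apply]
    rw [this]
    exact Finset.measurable_sup' _ (fun k _ => (by fun_prop : Measurable fun x : Fin n → ℝ => w k * x k))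
  set G : Fin n → Set (Fin n → ℝ) :=
    fun i => {x | M i x - 2 * ε ≤ w i * x i ∧ w i * x i ≤ M i x} with hGdef
  have hGmeas : ∀ i, MeasurableSet (G i) := by
    intro i
    exact (measurableSet_le ((hMmeas i).sub measurable_const)
        ((measurable_pi_apply i).const_mul (w i))).inter
      (measurableSet_le ((measurable_pi_apply i).const_mul (w i)) (hMmeas i))
  -- the bad event in the product space
  set A : Set (Fin n → ℝ) := {x | ∃ i j, i ≠ j ∧ (∀ k, w k * x k ≤ w j * x j) ∧
      w j * x j - 2 * ε ≤ w i * x i} with hAdef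
  have hAmeas : MeasurableSet A := by
    have : A = ⋃ i, ⋃ j, ({x : Fin n → ℝ | i ≠ j} ∩
        ((⋂ k, {x : Fin n → ℝ | w k * x k ≤ w j * x j}) ∩
          {x : Fin n → ℝ | w j * x j - 2 * ε ≤ w i * x i})) := by
      ext x
      simp [hAdef, Set.mem_iUnion, and_assoc]
    rw [this]
    refine MeasurableSet.iUnion fun i => MeasurableSet.iUnion fun j => ?_
    refine (MeasurableSet.const _).inter (MeasurableSet.inter ?_ ?_)
    · exact MeasurableSet.iInter fun k =>
        measurableSet_le (by fun_prop : Measurable fun x : Fin n → ℝ => w k * x k)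
          (by fun_prop : Measurable fun x : Fin n → ℝ => w j * x j)
    · exact measurableSet_le (by fun_prop : Measurable fun x : Fin n → ℝ => w j * x j - 2 * ε)
        (by fun_prop : Measurable fun x : Fin n → ℝ => w i * x i)
  have hAsub : A ⊆ ⋃ i, G i := by
    rintro x ⟨i, j, hij, hmax, hnear⟩
    have hjmem : j ∈ (Finset.univ : Finset (Fin n)).erase i :=
      Finset.mem_erase.mpr ⟨hij.symm, Finset.mem_univ j⟩
    have hMx : M i x = w j * x j := by
      refine le_antisymm (Finset.sup'_le _ _ fun k _ => hmax k) ?_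
      exact Finset.le_sup' (fun k => w k * x k) hjmem
    refine Set.mem_iUnion.mpr ⟨i, ?_, ?_⟩
    · rw [hMx]; exact hnear
    · rw [hMx]; exact hmax i
  -- per-index bound
  have hGbound : ∀ i, Measure.pi (fun _ : Fin n => ν) (G i) ≤ ENNReal.ofReal (8 * ε) := by
    intro i
    -- pick two indices a ≠ b in S, both different from i
    have hScard : 3 ≤ S.card := by omega
    have hcard1 : 2 ≤ (S.erase i).card := by
      have := Finset.pred_card_le_card_erase (s := S) (a := i)
      omega
    obtain ⟨a, ha⟩ := Finset.card_pos.mp (by omega : 0 < (S.erase i).card)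
    have hcard2 : 1 ≤ ((S.erase i).erase a).card := by
      have := Finset.pred_card_le_card_erase (s := S.erase i) (a := a)
      omega
    obtain ⟨b, hb⟩ := Finset.card_pos.mp (by omega : 0 < ((S.erase i).erase a).card)
    have hbne : b ≠ a := (Finset.mem_erase.mp hb).1
    have hbS' : b ∈ S.erase i := (Finset.mem_erase.mp hb).2
    have hane : a ≠ i := (Finset.mem_erase.mp ha).1
    have haS : a ∈ S := (Finset.mem_erase.mp ha).2
    have hbnei : b ≠ i := (Finset.mem_erase.mp hbS').1
    have hbS : b ∈ S := (Finset.mem_erase.mp hbS').2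
    have hab : a ≠ b := hbne.symm
    have hwa : w a = 1 := hSone a haS
    have hwb : w b = 1 := hSone b hbS
    have hwi0 : 0 ≤ w i := (hw i).1
    have hwi1 : w i ≤ 1 := (hw i).2
    set W : ℝ := w i + 2 * ε with hWdef
    set β : ℝ := if 2 * ε < w i then 2 * ε / w i else 1 with hβdef
    set γ : ℝ := min W 1 with hγdef
    have hβ0 : 0 ≤ β := by
      rw [hβdef]; split_ifs with h
      · positivity
      · norm_num
    have hγ0 : 0 ≤ γ := le_min (by linarith) (by norm_num)
    set fInd : (Fin n → ℝ) → ℝ≥0∞ := (G i).indicator (1 : (Fin n → ℝ) → ℝ≥0∞) with hfInd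
    have hfm : Measurable fInd := measurable_const.indicator (hGmeas i)
    set gA : (Fin n → ℝ) → ℝ≥0∞ :=
      Set.indicator {y : Fin n → ℝ | y a ≤ W ∧ y b ≤ W} (fun _ => ENNReal.ofReal β) with hgA
    set gB : (Fin n → ℝ) → ℝ≥0∞ :=
      Set.indicator {y : Fin n → ℝ | y a ≤ W} (fun _ => ENNReal.ofReal β * ENNReal.ofReal γ)
      with hgB
    have hνIic : ∀ c : ℝ, ν (Set.Iic c) ≤ ENNReal.ofReal (min c 1) := by
      intro c
      rw [hνdef, Measure.restrict_apply measurableSet_Iic]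
      calc volume (Set.Iic c ∩ Set.Icc (0:ℝ) 1) ≤ volume (Set.Icc (0:ℝ) (min c 1)) := by
            refine measure_mono ?_
            rintro t ⟨h1, h2, h3⟩
            exact Set.mem_Icc.mpr ⟨h2, le_min h1 h3⟩
        _ = ENNReal.ofReal (min c 1) := by rw [Real.volume_Icc, sub_zero]
    -- Claim A : the inner integral over coordinate i
    have cA : ∀ z, (∫⁻ t, fInd (Function.update z i t) ∂ν) ≤ gA z := by
      intro z
      set P : Set ℝ := (fun t => Function.update z i t) ⁻¹' (G i) with hPdef
      have hPm : MeasurableSet P := (hGmeas i).preimage (measurable_update z)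
      have hint : (∫⁻ t, fInd (Function.update z i t) ∂ν) = ν P := by
        rw [← lintegral_indicator_one hPm]
        refine lintegral_congr fun t => ?_
        simp [hfInd, Set.indicator_apply, hPdef, Set.mem_preimage]
      rw [hint]
      have hMupd : ∀ t : ℝ, M i (Function.update z i t) = M i z := by
        intro t
        refine Finset.sup'_congr (hne i) rfl fun k hk => ?_
        rw [Function.update_of_ne (Finset.ne_of_mem_erase hk)]
      by_cases hz : z a ≤ W ∧ z b ≤ W
      · have hgAz : gA z = ENNReal.ofReal β := by
          rw [hgA]
          exact Set.indicator_of_mem (s := {y : Fin n → ℝ | y a ≤ W ∧ y b ≤ W}) hz _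
        rw [hgAz]
        by_cases h2 : 2 * ε < w i
        · have hwpos : 0 < w i := lt_trans (by positivity) h2
          have hsub : P ⊆ Set.Icc ((M i z - 2 * ε) / w i) (M i z / w i) := by
            intro t ht
            simp only [hPdef, Set.mem_preimage, hGdef, Set.mem_setOf_eq,
              Function.update_self] at ht
            rw [hMupd t] at ht
            constructor
            · rw [div_le_iff₀ hwpos]
              linarith [ht.1, mul_comm (w i) t]
            · rw [le_div_iff₀ hwpos]
              linarith [ht.2, mul_comm (w i) t]
          calc ν P ≤ ν (Set.Icc ((M i z - 2 * ε) / w i) (M i z / w i)) := measure_mono hsub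
            _ ≤ volume (Set.Icc ((M i z - 2 * ε) / w i) (M i z / w i)) := by
                rw [hνdef, Measure.restrict_apply measurableSet_Icc]
                exact measure_mono Set.inter_subset_left
            _ = ENNReal.ofReal (2 * ε / w i) := by
                rw [Real.volume_Icc]
                congr 1
                field_simp
                ring
            _ = ENNReal.ofReal β := by rw [hβdef, if_pos h2]
        · have : β = 1 := by rw [hβdef, if_neg h2]
          rw [this, ENNReal.ofReal_one]
          exact prob_le_one
      · have hgAz : gA z = 0 := by
          rw [hgA]
          exact Set.indicator_of_notMem (s := {y : Fin n → ℝ | y a ≤ W ∧ y b ≤ W}) hz _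
        rw [hgAz, le_zero_iff]
        have hempty : P ∩ Set.Icc (0 : ℝ) 1 = ∅ := by
          ext t
          constructor
          · rintro ⟨hPt, ht0, ht1⟩
            exfalso
            simp only [hPdef, Set.mem_preimage, hGdef, Set.mem_setOf_eq,
              Function.update_self] at hPt
            rw [hMupd t] at hPt
            have hwt : w i * t ≤ w i := mul_le_of_le_one_right hwi0 ht1
            have hMle : M i z ≤ W := by rw [hWdef]; linarith [hPt.1]
            have hza : z a ≤ M i z := by
              have := Finset.le_sup' (fun k => w k * z k)
                (Finset.mem_erase.mpr ⟨hane, Finset.mem_univ a⟩)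
              rw [hwa, one_mul] at this
              exact this
            have hzb : z b ≤ M i z := by
              have := Finset.le_sup' (fun k => w k * z k)
                (Finset.mem_erase.mpr ⟨hbnei, Finset.mem_univ b⟩)
              rw [hwb, one_mul] at this
              exact this
            exact hz ⟨le_trans hza hMle, le_trans hzb hMle⟩
          · intro h
            exact (Set.notMem_empty t h).elim
        rw [hνdef, Measure.restrict_apply hPm, hempty, measure_empty]
    -- Claim B : integral over coordinate b
    have cB : ∀ y, (∫⁻ t, gA (Function.update y b t) ∂ν) ≤ gB y := by
      intro y
      have hrw : ∀ t : ℝ, gA (Function.update y b t)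
          = Set.indicator {t : ℝ | y a ≤ W ∧ t ≤ W} (fun _ => ENNReal.ofReal β) t := by
        intro t
        simp only [hgA, Set.indicator_apply, Set.mem_setOf_eq, Function.update_self,
          Function.update_of_ne hab]
      simp_rw [hrw]
      by_cases hya : y a ≤ W
      · have hset : {t : ℝ | y a ≤ W ∧ t ≤ W} = Set.Iic W := by
          ext t; simp [hya]
        rw [hset, lintegral_indicator_const measurableSet_Iic]
        have hgBy : gB y = ENNReal.ofReal β * ENNReal.ofReal γ := by
          rw [hgB]
          exact Set.indicator_of_mem (s := {y : Fin n → ℝ | y a ≤ W}) hya _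
        rw [hgBy]
        exact mul_le_mul_right (le_trans (hνIic W) (by rw [hγdef])) _
      · have hset : {t : ℝ | y a ≤ W ∧ t ≤ W} = (∅ : Set ℝ) := by
          ext t; simp [hya]
        rw [hset]
        simp
    -- Claim C : integral over coordinate a
    have cC : ∀ x, (∫⁻ t, gB (Function.update x a t) ∂ν) ≤ ENNReal.ofReal (8 * ε) := by
      intro x
      have hrw : ∀ t : ℝ, gB (Function.update x a t)
          = Set.indicator (Set.Iic W) (fun _ => ENNReal.ofReal β * ENNReal.ofReal γ) t := by
        intro t
        simp only [hgB, Set.indicator_apply, Set.mem_setOf_eq, Function.update_self,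
          Set.mem_Iic]
      simp_rw [hrw]
      rw [lintegral_indicator_const measurableSet_Iic]
      calc ENNReal.ofReal β * ENNReal.ofReal γ * ν (Set.Iic W)
          ≤ ENNReal.ofReal β * ENNReal.ofReal γ * ENNReal.ofReal γ :=
            mul_le_mul_right (le_trans (hνIic W) (by rw [hγdef])) _
        _ = ENNReal.ofReal (β * (γ * γ)) := by
            rw [ENNReal.ofReal_mul hβ0, ENNReal.ofReal_mul hγ0, mul_assoc]
        _ ≤ ENNReal.ofReal (8 * ε) := by
            apply ENNReal.ofReal_le_ofReal
            have hkey := near_max_key_real (w i) ε hwi0 hwi1 hε0 hε4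
            rw [hβdef, hγdef, hWdef]
            exact hkey
    -- assemble via iterated marginals
    have hbnotin : b ∉ ({i} : Finset (Fin n)) := by simp [hbnei]
    have hanotin : a ∉ insert b ({i} : Finset (Fin n)) := by simp [hab, hane]
    have hbound : (∫⋯∫⁻_insert a (insert b {i}), fInd ∂fun _ : Fin n => ν)
        ≤ ∫⋯∫⁻_insert a (insert b {i}), (fun _ => ENNReal.ofReal (8 * ε)) ∂fun _ : Fin n => ν := by
      intro x
      have hconst : (∫⋯∫⁻_insert a (insert b {i}), (fun _ => ENNReal.ofReal (8 * ε))
          ∂fun _ : Fin n => ν) x = ENNReal.ofReal (8 * ε) := by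
        simp [lmarginal, lintegral_const]
      rw [hconst, lmarginal_insert _ hfm hanotin x]
      calc (∫⁻ xa, (∫⋯∫⁻_insert b {i}, fInd ∂fun _ : Fin n => ν)
              (Function.update x a xa) ∂ν)
          ≤ ∫⁻ xa, gB (Function.update x a xa) ∂ν := by
            refine lintegral_mono fun xa => ?_
            rw [lmarginal_insert _ hfm hbnotin]
            calc (∫⁻ xb, (∫⋯∫⁻_{i}, fInd ∂fun _ : Fin n => ν)
                    (Function.update (Function.update x a xa) b xb) ∂ν)
                ≤ ∫⁻ xb, gA (Function.update (Function.update x a xa) b xb) ∂ν := by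
                  refine lintegral_mono fun xb => ?_
                  rw [lmarginal_singleton]
                  exact cA _
              _ ≤ gB (Function.update x a xa) := cB _
        _ ≤ ENNReal.ofReal (8 * ε) := cC x
    have hfinal : (∫⁻ x, fInd x ∂Measure.pi (fun _ : Fin n => ν))
        ≤ ∫⁻ _x, ENNReal.ofReal (8 * ε) ∂Measure.pi (fun _ : Fin n => ν) :=
      lintegral_le_of_lmarginal_le (insert a (insert b {i})) hfm measurable_const hbound
    calc Measure.pi (fun _ : Fin n => ν) (G i)
        = ∫⁻ x, fInd x ∂Measure.pi (fun _ : Fin n => ν) := by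
          rw [hfInd, lintegral_indicator_one (hGmeas i)]
      _ ≤ ∫⁻ _x, ENNReal.ofReal (8 * ε) ∂Measure.pi (fun _ : Fin n => ν) := hfinal
      _ = ENNReal.ofReal (8 * ε) := by rw [lintegral_const, measure_univ, mul_one]
  -- put everything together
  have hev : {ω | ∃ i j, i ≠ j ∧ (∀ k, w k * T k ω ≤ w j * T j ω) ∧
      w j * T j ω - 2 * ε ≤ w i * T i ω} = g ⁻¹' A := rfl
  calc μ {ω | ∃ i j, i ≠ j ∧ (∀ k, w k * T k ω ≤ w j * T j ω) ∧
        w j * T j ω - 2 * ε ≤ w i * T i ω}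
      = Measure.pi (fun _ : Fin n => ν) A := by
        rw [hev, ← Measure.map_apply hgm hAmeas, hmap]
    _ ≤ Measure.pi (fun _ : Fin n => ν) (⋃ i, G i) := measure_mono hAsub
    _ ≤ ∑' i : Fin n, Measure.pi (fun _ : Fin n => ν) (G i) := measure_iUnion_le _
    _ = ∑ i : Fin n, Measure.pi (fun _ : Fin n => ν) (G i) := tsum_fintype _
    _ ≤ ∑ _i : Fin n, ENNReal.ofReal (8 * ε) :=
        Finset.sum_le_sum fun i _ => hGbound i
    _ = (n : ℝ≥0∞) * ENNReal.ofReal (8 * ε) := by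
        rw [Finset.sum_const, Finset.card_univ, Fintype.card_fin, nsmul_eq_mul]
    _ ≤ ENNReal.ofReal Q := by
        rw [show ((n : ℝ≥0∞)) = ENNReal.ofReal (n : ℝ) from (ENNReal.ofReal_natCast n).symm,
          ← ENNReal.ofReal_mul (by positivity)]
        exact ENNReal.ofReal_le_ofReal (by nlinarith)
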